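/- For each k ∈ 𝑁, the right partial derivative of the map v ↦ ρ(v) at v = 0 in the k-th coordinate direction (derivative within the cube [0,1)^𝑁) exists and equals −b_k · ρ(0)^k / B̄_𝑁'(ρ(0)), where B̄_𝑁'(ρ(0)) = Σ_{j∉𝑁, j≥1} j·b_j·ρ(0)^{j−1} < 0; in particular this partial derivative is nonnegative. -/

import Mathlib

lemma aux_pow_lower' (x y : ℝ) (hx : 0 ≤ x) (hxy : x ≤ y) :
    ∀ m : ℕ, ((m:ℝ)+1) * x ^ m * (y - x) ≤ y ^ (m+1) - x ^ (m+1) := by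
  intro m
  induction m with
  | zero => simp
  | succ n ih =>
    have h2 : x ^ (n+1) ≤ y ^ (n+1) := pow_le_pow_left₀ hx hxy _
    have hstep : x * (((n:ℝ)+1) * x ^ n * (y - x)) ≤ x * (y ^ (n+1) - x ^ (n+1)) :=
      mul_le_mul_of_nonneg_left ih hx
    have hstep2 : x * (y ^ (n+1) - x ^ (n+1)) ≤ y * (y ^ (n+1) - x ^ (n+1)) :=
      mul_le_mul_of_nonneg_right hxy (sub_nonneg.2 h2)
    push_cast
    calc ((n:ℝ) + 1 + 1) * x ^ (n+1) * (y - x)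
        = x * (((n:ℝ)+1) * x ^ n * (y - x)) + x ^ (n+1) * (y - x) := by ring
      _ ≤ y * (y ^ (n+1) - x ^ (n+1)) + x ^ (n+1) * (y - x) := by linarith
      _ = y ^ (n+1+1) - x ^ (n+1+1) := by ring

lemma aux_pow_lower (x y : ℝ) (hx : 0 ≤ x) (hxy : x ≤ y) :
    ∀ j : ℕ, (j : ℝ) * x ^ (j - 1) * (y - x) ≤ y ^ j - x ^ j := by
  intro j
  cases j with
  | zero => simp
  | succ m =>
    have := aux_pow_lower' x y hx hxy m
    simpa [Nat.add_sub_cancel] using this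

lemma aux_pow_chord (x u : ℝ) (hx : 0 ≤ x) (hxu : x ≤ u) (hu : u ≤ 1) :
    ∀ j : ℕ, (u ^ j - x ^ j) * (1 - x) ≤ (u - x) * (1 - x ^ j) := by
  intro j
  induction j with
  | zero => simp
  | succ n ih =>
    have h1 : (0:ℝ) ≤ u := le_trans hx hxu
    have h5 : u * ((u ^ n - x ^ n) * (1 - x)) ≤ u * ((u - x) * (1 - x ^ n)) :=
      mul_le_mul_of_nonneg_left ih h1
    have hxn1 : x ^ n ≤ 1 := pow_le_one₀ hx (le_trans hxu hu)
    have h6 : u * ((u - x) * (1 - x ^ n)) ≤ 1 * ((u - x) * (1 - x ^ n)) :=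
      mul_le_mul_of_nonneg_right hu
        (mul_nonneg (sub_nonneg.2 hxu) (sub_nonneg.2 hxn1))
    calc (u ^ (n+1) - x ^ (n+1)) * (1 - x)
        = u * ((u ^ n - x ^ n) * (1 - x)) + x ^ n * ((u - x) * (1 - x)) := by ring
      _ ≤ 1 * ((u - x) * (1 - x ^ n)) + x ^ n * ((u - x) * (1 - x)) := by linarith
      _ = (u - x) * (1 - x ^ (n+1)) := by ring

lemma aux_pow_upper' (r x y : ℝ) (hr : 1/2 ≤ r) (hx : 0 ≤ x) (hxy : x ≤ y) (hyr : y ≤ r) :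
    ∀ m : ℕ, y ^ (m+1) - x ^ (m+1)
      ≤ ((m:ℝ)+1) * x ^ m * (y - x) + (y - x)^2 * (((m:ℝ)+1)^2 * r ^ m) := by
  intro m
  induction m with
  | zero => simp; nlinarith [sq_nonneg (y - x)]
  | succ n ih =>
    have hxr : x ≤ r := le_trans hxy hyr
    have hy0 : (0:ℝ) ≤ y := le_trans hx hxy
    have hr0 : (0:ℝ) ≤ r := le_trans (by norm_num) hr
    have hxn : x ^ n ≤ r ^ n := pow_le_pow_left₀ hx hxr n
    have hrn0 : (0:ℝ) ≤ r ^ n := pow_nonneg hr0 n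
    have step : y * (y ^ (n+1) - x ^ (n+1)) ≤
        y * (((n:ℝ)+1) * x ^ n * (y - x) + (y - x)^2 * (((n:ℝ)+1)^2 * r ^ n)) :=
      mul_le_mul_of_nonneg_left ih hy0
    have e1 : ((n:ℝ)+1) * x ^ n * (y - x)^2 ≤ ((n:ℝ)+1) * r ^ n * (y - x)^2 := by
      apply mul_le_mul_of_nonneg_right _ (sq_nonneg _)
      exact mul_le_mul_of_nonneg_left hxn (by positivity)
    have e2 : y * ((y - x)^2 * (((n:ℝ)+1)^2 * r ^ n)) ≤ r * ((y - x)^2 * (((n:ℝ)+1)^2 * r ^ n)) :=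
      mul_le_mul_of_nonneg_right hyr (by positivity)
    have final : ((n:ℝ)+1) * r ^ n + ((n:ℝ)+1)^2 * (r * r ^ n) ≤ ((n:ℝ)+2)^2 * (r * r ^ n) := by
      have h2r : (1:ℝ) ≤ 2 * r := by linarith
      nlinarith [mul_le_mul_of_nonneg_left h2r
        (mul_nonneg (by positivity : (0:ℝ) ≤ ((n:ℝ)+1)) hrn0),
        mul_nonneg (mul_nonneg hr0 hrn0) (by positivity : (0:ℝ) ≤ (n:ℝ)+1)]
    have final2 : (y-x)^2 * (((n:ℝ)+1) * r ^ n + ((n:ℝ)+1)^2 * (r * r ^ n))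
        ≤ (y-x)^2 * (((n:ℝ)+2)^2 * (r * r ^ n)) :=
      mul_le_mul_of_nonneg_left final (sq_nonneg _)
    push_cast
    calc y ^ (n+1+1) - x ^ (n+1+1)
        = y * (y ^ (n+1) - x ^ (n+1)) + x ^ (n+1) * (y - x) := by ring
      _ ≤ y * (((n:ℝ)+1) * x ^ n * (y - x) + (y - x)^2 * (((n:ℝ)+1)^2 * r ^ n))
            + x ^ (n+1) * (y - x) := by linarith
      _ = ((n:ℝ)+1) * (x * x ^ n) * (y - x) + ((n:ℝ)+1) * x ^ n * (y - x)^2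
            + y * ((y - x)^2 * (((n:ℝ)+1)^2 * r ^ n)) + x ^ (n+1) * (y - x) := by ring
      _ ≤ ((n:ℝ)+1) * (x * x ^ n) * (y - x) + ((n:ℝ)+1) * r ^ n * (y - x)^2
            + r * ((y - x)^2 * (((n:ℝ)+1)^2 * r ^ n)) + x ^ (n+1) * (y - x) := by linarith
      _ = ((n:ℝ)+1+1) * x ^ (n+1) * (y - x)
            + (y-x)^2 * (((n:ℝ)+1) * r ^ n + ((n:ℝ)+1)^2 * (r * r ^ n)) := by ring
      _ ≤ ((n:ℝ)+1+1) * x ^ (n+1) * (y - x) + (y-x)^2 * (((n:ℝ)+2)^2 * (r * r ^ n)) := by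
            linarith
      _ = ((n:ℝ)+1+1) * x ^ (n+1) * (y - x) + (y-x)^2 * (((n:ℝ)+1+1)^2 * r ^ (n+1)) := by ring

lemma aux_pow_upper (r x y : ℝ) (hr : 1/2 ≤ r) (hx : 0 ≤ x) (hxy : x ≤ y) (hyr : y ≤ r) :
    ∀ j : ℕ, y ^ j - x ^ j ≤ (j:ℝ) * x ^ (j-1) * (y - x) + (y - x)^2 * ((j:ℝ)^2 * r ^ (j-1)) := by
  intro j
  cases j with
  | zero => simp
  | succ m =>
    have := aux_pow_upper' r x y hr hx hxy hyr m
    simpa [Nat.add_sub_cancel] using this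

set_option maxHeartbeats 1000000 in
/-- For each `k ∈ N`, the right partial derivative of `v ↦ ρ(v)` at `v = 0`
in the `k`-th coordinate direction (derivative within the cube `[0,1)^N`) exists and equals
`−b_k · ρ(0)^k / B̄_N'(ρ(0))`, where `B̄_N'(ρ(0)) = Σ_{j∉N, j≥1} j·b_j·ρ(0)^{j−1} < 0`;
in particular this partial derivative is nonnegative. -/
theorem stmt_5
    (b : ℕ → ℝ)
    (hb_nonneg : ∀ j : ℕ, j ≠ 1 → 0 ≤ b j)
    (hb1 : b 1 < 0)
    (hb_sum : HasSum (fun j : ℕ => if j = 1 then 0 else b j) (-(b 1)))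
    (N : Finset ℕ) (hN : N.Nonempty) (h1N : (1 : ℕ) ∉ N)
    (hbN : ∀ k ∈ N, 0 < b k)
    (ρ : ({x // x ∈ N} → ℝ) → ℝ)
    (hρ : ∀ v : {x // x ∈ N} → ℝ, (∀ j, v j ∈ Set.Icc (0 : ℝ) 1) →
      IsLeast {u : ℝ | u ∈ Set.Icc (0 : ℝ) 1 ∧
          (∑' j : ℕ, if j ∈ N then 0 else b j * u ^ j)
            + (∑ j : {x // x ∈ N}, b j * v j * u ^ (j : ℕ)) = 0} (ρ v))
    (k : {x // x ∈ N}) :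
    ∃ d : ℝ,
      HasSum (fun j : ℕ =>
        if j ∉ N ∧ 1 ≤ j then (j : ℝ) * b j * (ρ 0) ^ (j - 1) else 0) d ∧
      d < 0 ∧
      HasDerivWithinAt (fun s : ℝ => ρ (fun j => if j = k then s else 0))
        (-(b k * (ρ 0) ^ (k : ℕ)) / d) (Set.Ico (0 : ℝ) 1) 0 ∧
      0 ≤ -(b k * (ρ 0) ^ (k : ℕ)) / d := by
  classical
  set ρ0 : ℝ := ρ 0 with hρ0_def
  set c : ℕ → ℝ := fun j => if j ∈ N then 0 else b j with hc_def
  set f : ℝ → ℝ := fun u => ∑' j, c j * u ^ j with hf_def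
  have hc_abs : ∀ j, |c j| ≤ |b j| := by
    intro j; by_cases h : j ∈ N <;> simp [hc_def, h, abs_nonneg]
  have hc_nonneg : ∀ j, j ≠ 1 → 0 ≤ c j := by
    intro j hj
    by_cases h : j ∈ N <;> simp [hc_def, h, hb_nonneg j hj]
  have habs : Summable (fun j => |b j|) := by
    have h1 : Summable (fun j : ℕ => if j = 1 then 0 else b j) := hb_sum.summable
    have h2 : Summable (fun j : ℕ => if j = 1 then -(b j) else 0) :=
      (hasSum_ite_eq 1 (-(b 1))).summable.congr (by
        intro j; by_cases h : j = 1 <;> simp [h])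
    apply (h1.add h2).congr
    intro j
    by_cases h : j = 1
    · subst h; simp [abs_of_neg hb1]
    · simp [h, abs_of_nonneg (hb_nonneg j h)]
  -- b has sum 0
  have hb0 : HasSum b 0 := by
    have h2 : HasSum (fun j : ℕ => if j = 1 then b j else 0) (b 1) :=
      (hasSum_ite_eq 1 (b 1)).congr_fun (by
        intro j; by_cases h : j = 1 <;> simp [h])
    have := hb_sum.add h2
    rw [neg_add_cancel] at this
    apply this.congr_fun
    intro j; by_cases h : j = 1 <;> simp [h]
  set S : ℝ := ∑ j ∈ N, b j with hS_def
  have hSpos : 0 < S := Finset.sum_pos (fun j hj => hbN j hj) hN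
  have hcS : HasSum c (-S) := by
    have hind : HasSum (fun j : ℕ => if j ∈ N then b j else 0) S := by
      have := hasSum_sum_of_ne_finset_zero
        (f := fun j : ℕ => if j ∈ N then b j else 0) (s := N) (L := SummationFilter.unconditional ℕ)
        (by intro j hj; simp [hj])
      rwa [Finset.sum_congr rfl (fun j hj => if_pos hj)] at this
    have := hb0.sub hind
    rw [zero_sub] at this
    apply this.congr_fun
    intro j; by_cases h : j ∈ N <;> simp [hc_def, h]
  have hsc : Summable c := hcS.summable
  have hsummc : ∀ u : ℝ, 0 ≤ u → u ≤ 1 → Summable (fun j => c j * u ^ j) := by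
    intro u h0 h1
    apply Summable.of_abs
    apply Summable.of_nonneg_of_le (fun _ => abs_nonneg _) _ habs
    intro j
    rw [abs_mul, abs_pow, abs_of_nonneg h0]
    have h2 : |c j| * u ^ j ≤ |b j| * 1 :=
      mul_le_mul (hc_abs j) (pow_le_one₀ h0 h1) (by positivity) (abs_nonneg _)
    simpa using h2
  have hf1 : f 1 = -S := by
    have h : (fun j => c j * (1:ℝ) ^ j) = c := by funext j; simp
    show (∑' j, c j * (1:ℝ) ^ j) = -S
    rw [h, hcS.tsum_eq]
  have htsum_eq : ∀ u : ℝ, (∑' j : ℕ, if j ∈ N then 0 else b j * u ^ j) = f u := by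
    intro u
    apply tsum_congr
    intro j
    by_cases h : j ∈ N <;> simp [hc_def, h]
  -- the base root
  have h00 : ∀ j : {x // x ∈ N}, (0 : {x // x ∈ N} → ℝ) j ∈ Set.Icc (0:ℝ) 1 := by
    intro j; simp
  obtain ⟨⟨hmem0, heq0⟩, -⟩ := hρ 0 h00
  rw [htsum_eq] at heq0
  have hfρ0 : f ρ0 = 0 := by
    have : (∑ j : {x // x ∈ N}, b j * (0 : {x // x ∈ N} → ℝ) j * (ρ 0) ^ (j:ℕ)) = 0 := by
      simp
    rw [this, add_zero] at heq0
    exact heq0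
  have hρ00 : 0 ≤ ρ0 := hmem0.1
  have hρ01 : ρ0 ≤ 1 := hmem0.2
  have hρ0lt1 : ρ0 < 1 := by
    rcases lt_or_eq_of_le hρ01 with h | h
    · exact h
    · exfalso; rw [h] at hfρ0; rw [hf1] at hfρ0; linarith
  set r : ℝ := (1 + ρ0) / 2 with hr_def
  have hr2 : 1/2 ≤ r := by rw [hr_def]; linarith
  have hρ0r : ρ0 < r := by rw [hr_def]; linarith
  have hr1 : r < 1 := by rw [hr_def]; linarith
  have hr0 : 0 ≤ r := by linarith
  set A : ℝ := ∑' j, |b j| with hA_def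
  have hcA : ∀ j, |c j| ≤ A :=
    fun j => (hc_abs j).trans (Summable.le_tsum habs j fun m _ => abs_nonneg _)
  have hA0 : 0 ≤ A := (abs_nonneg _).trans (hcA 0)
  -- geometric-type summability
  have hnormr : ‖r‖ < 1 := by rw [Real.norm_eq_abs, abs_of_nonneg hr0]; exact hr1
  have hgeom2 : Summable (fun n : ℕ => (((n:ℝ)+1)^2 * A) * r ^ n) := by
    have s2 := summable_pow_mul_geometric_of_norm_lt_one (R := ℝ) 2 hnormr
    have s1 := summable_pow_mul_geometric_of_norm_lt_one (R := ℝ) 1 hnormr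
    have s0 := summable_pow_mul_geometric_of_norm_lt_one (R := ℝ) 0 hnormr
    have := ((s2.add (s1.mul_left 2)).add s0).mul_right A
    apply this.congr
    intro n; push_cast; ring
  set d := (∑' j : ℕ, (j:ℝ) * c j * ρ0 ^ (j-1) : ℝ) with hd_def
  set M := (∑' j : ℕ, |c j| * (j:ℝ)^2 * r ^ (j-1) : ℝ) with hM_def
  have hD_sum : Summable (fun j : ℕ => (j:ℝ) * c j * ρ0 ^ (j-1)) := by
    apply (summable_nat_add_iff 1).mp
    apply Summable.of_abs
    apply Summable.of_nonneg_of_le (fun _ => abs_nonneg _) _ hgeom2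
    intro n
    simp only [Nat.add_sub_cancel]
    rw [abs_mul, abs_mul, abs_pow, abs_of_nonneg hρ00]
    rw [Nat.abs_cast]
    apply mul_le_mul
    · apply mul_le_mul _ (hcA _) (abs_nonneg _) (by positivity)
      push_cast; nlinarith [Nat.cast_nonneg (α := ℝ) n]
    · exact pow_le_pow_left₀ hρ00 hρ0r.le n
    · exact pow_nonneg hρ00 n
    · positivity
  have hM_sum : Summable (fun j => |c j| * (j:ℝ)^2 * r ^ (j-1)) := by
    apply (summable_nat_add_iff 1).mp
    apply Summable.of_nonneg_of_le (fun n => by positivity) _ hgeom2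
    intro n
    simp only [Nat.add_sub_cancel]
    apply mul_le_mul_of_nonneg_right _ (pow_nonneg hr0 n)
    push_cast
    rw [mul_comm]
    exact mul_le_mul_of_nonneg_left (hcA _) (by positivity)
  have hM0 : 0 ≤ M := tsum_nonneg (fun j => by positivity)
  -- gradient inequality
  have hgrad : ∀ y : ℝ, ρ0 ≤ y → y ≤ 1 → d * (y - ρ0) ≤ f y - f ρ0 := by
    intro y h1 h2
    have hy0 : 0 ≤ y := hρ00.trans h1
    have hsy := hsummc y hy0 h2
    have hsx := hsummc ρ0 hρ00 hρ01
    have hterm : ∀ j : ℕ, ((j:ℝ) * c j * ρ0 ^ (j-1)) * (y - ρ0) ≤ c j * y ^ j - c j * ρ0 ^ j := by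
      intro j
      by_cases hj : j = 1
      · subst hj
        apply le_of_eq
        simp only [Nat.sub_self, pow_zero, pow_one, Nat.cast_one, one_mul, mul_one]
        ring
      · have hcj := hc_nonneg j hj
        have h3 := mul_le_mul_of_nonneg_left (aux_pow_lower ρ0 y hρ00 h1 j) hcj
        nlinarith [h3]
    have e1 : d * (y - ρ0) = ∑' j : ℕ, ((j:ℝ) * c j * ρ0 ^ (j-1)) * (y - ρ0) := by
      rw [tsum_mul_right, ← hd_def]
    have e2 : (∑' j : ℕ, ((j:ℝ) * c j * ρ0 ^ (j-1)) * (y - ρ0))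
        ≤ ∑' j, (c j * y ^ j - c j * ρ0 ^ j) :=
      Summable.tsum_le_tsum hterm (hD_sum.mul_right _) (hsy.sub hsx)
    have e3 : (∑' j, (c j * y ^ j - c j * ρ0 ^ j)) = f y - f ρ0 := Summable.tsum_sub hsy hsx
    rw [e1, ← e3]
    exact e2
  -- taylor inequality
  have htay : ∀ y : ℝ, ρ0 ≤ y → y ≤ r → f y - f ρ0 ≤ d * (y - ρ0) + M * (y - ρ0)^2 := by
    intro y h1 h2
    have hy0 : 0 ≤ y := hρ00.trans h1
    have hsy := hsummc y hy0 (h2.trans hr1.le)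
    have hsx := hsummc ρ0 hρ00 hρ01
    have hterm : ∀ j, c j * y ^ j - c j * ρ0 ^ j ≤
        ((j:ℝ) * c j * ρ0 ^ (j-1)) * (y - ρ0) + (|c j| * (j:ℝ)^2 * r ^ (j-1)) * (y - ρ0)^2 := by
      intro j
      by_cases hj : j = 1
      · subst hj
        have hpos : 0 ≤ (|c 1| * ((1:ℕ):ℝ)^2 * r ^ (1-1)) * (y - ρ0)^2 := by positivity
        have heq : c 1 * y ^ 1 - c 1 * ρ0 ^ 1 = (((1:ℕ):ℝ) * c 1 * ρ0 ^ (1-1)) * (y - ρ0) := by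
          norm_num; ring
        linarith [heq.le]
      · have hcj := hc_nonneg j hj
        have h3 := mul_le_mul_of_nonneg_left (aux_pow_upper r ρ0 y hr2 hρ00 h1 h2 j) hcj
        have habsj : |c j| = c j := abs_of_nonneg hcj
        rw [habsj]
        nlinarith [h3]
    have e0 : f y - f ρ0 = ∑' j, (c j * y ^ j - c j * ρ0 ^ j) := (Summable.tsum_sub hsy hsx).symm
    have e2 : (∑' j, (c j * y ^ j - c j * ρ0 ^ j))
        ≤ ∑' j : ℕ, (((j:ℝ) * c j * ρ0 ^ (j-1)) * (y - ρ0)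
            + (|c j| * (j:ℝ)^2 * r ^ (j-1)) * (y - ρ0)^2) :=
      Summable.tsum_le_tsum hterm (hsy.sub hsx)
        ((hD_sum.mul_right _).add (hM_sum.mul_right _))
    have e3 : (∑' j : ℕ, (((j:ℝ) * c j * ρ0 ^ (j-1)) * (y - ρ0)
            + (|c j| * (j:ℝ)^2 * r ^ (j-1)) * (y - ρ0)^2))
        = d * (y - ρ0) + M * (y - ρ0)^2 := by
      rw [Summable.tsum_add (hD_sum.mul_right _) (hM_sum.mul_right _),
        tsum_mul_right, tsum_mul_right, ← hd_def, ← hM_def]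
    rw [e0, ← e3]
    exact e2
  -- chord inequality
  have hchordf : ∀ x u : ℝ, 0 ≤ x → x ≤ u → u ≤ 1 →
      (f u - f x) * (1 - x) ≤ (u - x) * (-S - f x) := by
    intro x u hx hxu hu1
    have hsx := hsummc x hx (hxu.trans hu1)
    have hsu := hsummc u (hx.trans hxu) hu1
    have hterm : ∀ j, (c j * u ^ j - c j * x ^ j) * (1 - x)
        ≤ (u - x) * (c j - c j * x ^ j) := by
      intro j
      by_cases hj : j = 1
      · subst hj
        apply le_of_eq
        simp only [Nat.sub_self, pow_zero, pow_one, Nat.cast_one, one_mul, mul_one]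
        ring
      · have hcj := hc_nonneg j hj
        have h3 := mul_le_mul_of_nonneg_left (aux_pow_chord x u hx hxu hu1 j) hcj
        nlinarith [h3]
    have hsum1 : Summable (fun j => (c j * u ^ j - c j * x ^ j) * (1 - x)) :=
      (hsu.sub hsx).mul_right _
    have hsum2 : Summable (fun j => (u - x) * (c j - c j * x ^ j)) :=
      (hsc.sub hsx).mul_left _
    have := Summable.tsum_le_tsum hterm hsum1 hsum2
    rw [tsum_mul_right, Summable.tsum_sub hsu hsx, tsum_mul_left, Summable.tsum_sub hsc hsx,
      hcS.tsum_eq] at this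
    exact this
  -- d is negative
  have hdneg : d < 0 := by
    have h := hgrad 1 hρ01 le_rfl
    rw [hf1, hfρ0, sub_zero] at h
    nlinarith
  have hdpos : 0 < -d := by linarith
  have hbk : 0 < b (k:ℕ) := by exact hbN (k:ℕ) k.2
  -- the perturbed roots
  set g : ℝ → ℝ := fun s => ρ (fun j => if j = k then s else 0) with hg_def
  have hgs : ∀ s : ℝ, 0 ≤ s → s ≤ 1 →
      0 ≤ g s ∧ g s ≤ 1 ∧ f (g s) + b (k:ℕ) * s * (g s) ^ (k:ℕ) = 0 := by
    intro s h0 h1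
    have hcoord : ∀ j : {x // x ∈ N},
        (fun j : {x // x ∈ N} => if j = k then s else 0) j ∈ Set.Icc (0:ℝ) 1 := by
      intro j; by_cases h : j = k <;> simp [h, h0, h1]
    obtain ⟨⟨hm, he⟩, -⟩ := hρ _ hcoord
    rw [htsum_eq] at he
    refine ⟨hm.1, hm.2, ?_⟩
    have hsum : (∑ j : {x // x ∈ N}, b (j:ℕ) * (if j = k then s else 0)
        * (ρ (fun j : {x // x ∈ N} => if j = k then s else 0)) ^ (j:ℕ))
        = b (k:ℕ) * s * (g s) ^ (k:ℕ) := by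
      rw [Finset.sum_eq_single_of_mem k (Finset.mem_univ k)]
      · simp [hg_def]
      · intro j _ hjk; simp [hjk]
    rw [hsum] at he
    exact he
  have hg0 : g 0 = ρ0 := by
    have hz : (fun j : {x // x ∈ N} => if j = k then (0:ℝ) else 0) = 0 := by
      funext j; simp
    show ρ (fun j => if j = k then (0:ℝ) else 0) = ρ 0
    rw [hz]
  -- claims for s ∈ (0,1)
  have claimA : ∀ s : ℝ, 0 ≤ s → s ≤ 1 → ρ0 ≤ g s := by
    intro s h0 h1
    obtain ⟨hu0, hu1, heq⟩ := hgs s h0 h1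
    by_contra hcon
    push_neg at hcon
    have hfu : f (g s) = -(b (k:ℕ) * s * (g s) ^ (k:ℕ)) := by linarith
    have hfu_nonpos : f (g s) ≤ 0 := by
      rw [hfu]
      have : 0 ≤ b (k:ℕ) * s * (g s) ^ (k:ℕ) := by positivity
      linarith
    have hch := hchordf (g s) ρ0 hu0 hcon.le hρ01
    rw [hfρ0] at hch
    nlinarith [mul_nonneg (neg_nonneg.2 hfu_nonpos) (by linarith : (0:ℝ) ≤ 1 - ρ0),
      mul_pos (by linarith : (0:ℝ) < ρ0 - g s) hSpos]
  have claimB : ∀ s : ℝ, 0 ≤ s → s ≤ 1 →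
      (g s - ρ0) * S ≤ s * (b (k:ℕ) * (1 - ρ0)) := by
    intro s h0 h1
    obtain ⟨hu0, hu1, heq⟩ := hgs s h0 h1
    have hA' := claimA s h0 h1
    have hch := hchordf ρ0 (g s) hρ00 hA' hu1
    rw [hfρ0] at hch
    have hfu : f (g s) = -(b (k:ℕ) * s * (g s) ^ (k:ℕ)) := by linarith
    have hpow1 : (g s) ^ (k:ℕ) ≤ 1 := pow_le_one₀ hu0 hu1
    nlinarith [mul_le_mul_of_nonneg_right
      (mul_le_mul_of_nonneg_left hpow1 (mul_nonneg hbk.le h0))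
      (by linarith : (0:ℝ) ≤ 1 - ρ0)]
  have claimC : ∀ s : ℝ, 0 ≤ s → s ≤ 1 →
      s * (b (k:ℕ) * ρ0 ^ (k:ℕ)) ≤ (-d) * (g s - ρ0) := by
    intro s h0 h1
    obtain ⟨hu0, hu1, heq⟩ := hgs s h0 h1
    have hA' := claimA s h0 h1
    have hg' := hgrad (g s) hA' hu1
    rw [hfρ0, sub_zero] at hg'
    have hpow : ρ0 ^ (k:ℕ) ≤ (g s) ^ (k:ℕ) := pow_le_pow_left₀ hρ00 hA' (k:ℕ)
    have := mul_le_mul_of_nonneg_left hpow (mul_nonneg hbk.le h0)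
    nlinarith
  have claimD : ∀ s : ℝ, 0 ≤ s → s ≤ 1 → g s ≤ r →
      (-d) * (g s - ρ0) ≤ s * (b (k:ℕ) * (g s) ^ (k:ℕ)) + M * (g s - ρ0)^2 := by
    intro s h0 h1 hgr
    obtain ⟨hu0, hu1, heq⟩ := hgs s h0 h1
    have hA' := claimA s h0 h1
    have ht := htay (g s) hA' hgr
    rw [hfρ0, sub_zero] at ht
    nlinarith
  -- constants
  set C₁ : ℝ := b (k:ℕ) * (1 - ρ0) / S with hC₁_def
  have hC₁pos : 0 < C₁ := by
    apply div_pos _ hSpos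
    have : 0 < 1 - ρ0 := by linarith
    positivity
  have hΔle : ∀ s : ℝ, 0 ≤ s → s ≤ 1 → g s - ρ0 ≤ C₁ * s := by
    intro s h0 h1
    have := claimB s h0 h1
    rw [hC₁_def]
    rw [div_mul_eq_mul_div, le_div_iff₀ hSpos]
    nlinarith
  set s₁ : ℝ := (r - ρ0) / C₁ with hs₁_def
  have hs₁pos : 0 < s₁ := div_pos (by linarith) hC₁pos
  set L : ℝ := b (k:ℕ) * ρ0 ^ (k:ℕ) / (-d) with hL_def
  have hLval : -(b (k:ℕ) * ρ0 ^ (k:ℕ)) / d = L := by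
    rw [hL_def, div_neg, neg_div]
  have hL0 : 0 ≤ L := by
    rw [hL_def]
    apply div_nonneg _ hdpos.le
    positivity
  refine ⟨d, ?_, hdneg, ?_, ?_⟩
  · -- HasSum statement
    have hfun : (fun j : ℕ => if j ∉ N ∧ 1 ≤ j then (j:ℝ) * b j * ρ0 ^ (j-1) else 0)
        = (fun j : ℕ => (j:ℝ) * c j * ρ0 ^ (j-1)) := by
      funext j
      by_cases hjN : j ∈ N
      · simp [hjN, hc_def]
      · by_cases hj0 : j = 0
        · subst hj0; simp
        · have : 1 ≤ j := Nat.one_le_iff_ne_zero.mpr hj0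
          simp [hjN, this, hc_def]
    rw [hfun, hd_def]
    exact hD_sum.hasSum
  · -- derivative
    rw [hLval]
    rw [hasDerivWithinAt_iff_tendsto_slope]
    rw [Set.Ico_diff_left]
    set U : ℝ → ℝ :=
      fun t => (b (k:ℕ) * (ρ0 + C₁ * t) ^ (k:ℕ) + M * C₁^2 * t) / (-d) with hU_def
    have hUcont : Continuous U := by
      apply Continuous.div_const
      fun_prop
    have hU0 : U 0 = L := by
      rw [hU_def, hL_def]
      simp
    have hUtend : Filter.Tendsto U (nhdsWithin 0 (Set.Ioo (0:ℝ) 1)) (nhds L) := by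
      rw [← hU0]
      exact (hUcont.tendsto 0).mono_left nhdsWithin_le_nhds
    apply tendsto_of_tendsto_of_tendsto_of_le_of_le' tendsto_const_nhds hUtend
    · -- lower bound eventually
      filter_upwards [self_mem_nhdsWithin] with s hs
      show L ≤ slope g 0 s
      rw [slope_def_field, hg0, sub_zero, le_div_iff₀ hs.1, hL_def,
        div_mul_eq_mul_div, div_le_iff₀ hdpos]
      have := claimC s hs.1.le hs.2.le
      nlinarith
    · -- upper bound eventually
      filter_upwards [self_mem_nhdsWithin,
        nhdsWithin_le_nhds (Iio_mem_nhds hs₁pos)] with s hs hs'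
      obtain ⟨hu0, hu1, heq⟩ := hgs s hs.1.le hs.2.le
      have hA' := claimA s hs.1.le hs.2.le
      have hΔ := hΔle s hs.1.le hs.2.le
      have hC₁s₁ : C₁ * s₁ = r - ρ0 := by
        rw [hs₁_def]; field_simp
      have hgr : g s ≤ r := by
        have h1 : C₁ * s ≤ C₁ * s₁ := mul_le_mul_of_nonneg_left (le_of_lt hs') hC₁pos.le
        linarith
      have hD2 := claimD s hs.1.le hs.2.le hgr
      show slope g 0 s ≤ U s
      have hUs : U s = (b (k:ℕ) * (ρ0 + C₁ * s) ^ (k:ℕ) + M * C₁^2 * s) / (-d) := rfl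
      rw [slope_def_field, hg0, sub_zero, hUs, div_le_div_iff₀ hs.1 hdpos]
      have hpowle : (g s) ^ (k:ℕ) ≤ (ρ0 + C₁ * s) ^ (k:ℕ) :=
        pow_le_pow_left₀ hu0 (by linarith) (k:ℕ)
      have hsq : (g s - ρ0)^2 ≤ (C₁ * s)^2 :=
        pow_le_pow_left₀ (by linarith) hΔ 2
      nlinarith [mul_le_mul_of_nonneg_left hpowle (mul_nonneg hbk.le hs.1.le),
        mul_le_mul_of_nonneg_left hsq hM0]
  · rw [hLval]; exact hL0
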